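/- Abstract big-step implementation theorem (divergence transfer): in a lax implementation system where ⇒ is deterministic, if the strategy →str has an infinite reduction sequence from ⟦Q₀⟧, then the machine has an infinite run from Q₀ containing infinitely many principal transitions. -/
import Mathlib


/-- Dal Lago–Martini diamond property. -/
def Diamond {A : Type*} (r : A → A → Prop) : Prop :=
  ∀ t s₁ s₂, r t s₁ → r t s₂ → s₁ ≠ s₂ → ∃ u, r s₁ u ∧ r s₂ u

/-- Divergence: existence of an infinite reduction sequence. -/
def Diverges {A : Type*} (r : A → A → Prop) (t : A) : Prop :=
  ∃ f : ℕ → A, f 0 = t ∧ ∀ n, r (f n) (f (n + 1))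

/-- Diamond implies divergence is preserved by one-step reduction. -/
lemma div_step {A : Type*} {r : A → A → Prop} (dia : Diamond r)
    {t s : A} (ht : Diverges r t) (hts : r t s) : Diverges r s := by
  classical
  obtain ⟨f, hf0, hf⟩ := ht
  -- invariant for the constructed sequence
  set inv : ℕ → A → Prop := fun n x => r (f n) x ∨ x = f (n + 1) with hinv
  have hinv0 : inv 0 s := Or.inl (hf0 ▸ hts)
  have step : ∀ n x, inv n x → ∃ y, r x y ∧ inv (n + 1) y := by
    intro n x hx
    by_cases hxe : x = f (n + 1)
    · subst hxe
      exact ⟨f (n + 2), hf (n + 1), Or.inr rfl⟩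
    · rcases hx with hx | hx
      · obtain ⟨u, hu1, hu2⟩ := dia (f n) x (f (n + 1)) hx (hf n) hxe
        exact ⟨u, hu1, Or.inl hu2⟩
      · exact absurd hx hxe
  choose y hy1 hy2 using step
  let F : ∀ n : ℕ, {x : A // inv n x} := fun n =>
    Nat.rec ⟨s, hinv0⟩ (fun k pr => ⟨y k pr.1 pr.2, hy2 k pr.1 pr.2⟩) n
  refine ⟨fun n => (F n).1, rfl, ?_⟩
  intro n
  exact hy1 n (F n).1 (F n).2

theorem divergence_transfer {S T : Type*}
    (p se : S → S → Prop) (rstr : T → T → Prop) (decode : S → T)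
    (projection : ∀ Q Q', p Q Q' → rstr (decode Q) (decode Q'))
    (transparency : ∀ Q Q', se Q Q' → decode Q = decode Q')
    (seaTerminates : WellFounded (fun Q' Q => se Q Q'))
    (halt : ∀ Q : S, (∀ Q', ¬ p Q Q') → (∀ Q', ¬ se Q Q') →
      ∀ s, ¬ rstr (decode Q) s)
    (diamond : Diamond rstr)
    (det : ∀ Q Q₁ Q₂ : S, (p Q Q₁ ∨ se Q Q₁) → (p Q Q₂ ∨ se Q Q₂) → Q₁ = Q₂)
    (Q₀ : S) (f : ℕ → T) (hf0 : f 0 = decode Q₀)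
    (hf : ∀ n, rstr (f n) (f (n + 1))) :
    ∃ g : ℕ → S, g 0 = Q₀ ∧
      (∀ n, p (g n) (g (n + 1)) ∨ se (g n) (g (n + 1))) ∧
      (∀ n, ∃ m, n ≤ m ∧ p (g m) (g (m + 1))) := by
  classical
  -- from any state whose decode is divergent, the machine can step,
  -- and divergence of the decode is preserved
  have step : ∀ Q : S, Diverges rstr (decode Q) →
      ∃ Q', (p Q Q' ∨ se Q Q') ∧ Diverges rstr (decode Q') := by
    intro Q hQ
    have hne : ¬ ((∀ Q', ¬ p Q Q') ∧ (∀ Q', ¬ se Q Q')) := by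
      rintro ⟨h1, h2⟩
      obtain ⟨h, h0, hs⟩ := hQ
      exact halt Q h1 h2 (h 1) (h0 ▸ hs 0)
    by_cases h1 : ∃ Q', p Q Q'
    · obtain ⟨Q', hQ'⟩ := h1
      exact ⟨Q', Or.inl hQ', div_step diamond hQ (projection Q Q' hQ')⟩
    · push_neg at h1
      have h2 : ∃ Q', se Q Q' := by
        by_contra h2
        push_neg at h2
        exact hne ⟨h1, h2⟩
      obtain ⟨Q', hQ'⟩ := h2
      exact ⟨Q', Or.inr hQ', (transparency Q Q' hQ') ▸ hQ⟩
  choose y hy1 hy2 using step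
  have hQ₀ : Diverges rstr (decode Q₀) := ⟨f, hf0, hf⟩
  let F : ℕ → {Q : S // Diverges rstr (decode Q)} := fun n =>
    Nat.rec ⟨Q₀, hQ₀⟩ (fun _ pr => ⟨y pr.1 pr.2, hy2 pr.1 pr.2⟩) n
  refine ⟨fun n => (F n).1, rfl, fun n => hy1 (F n).1 (F n).2, ?_⟩
  -- infinitely many principal steps: no infinite `se`-chain
  have nochain : ∀ Q : S, ∀ a : ℕ → S, a 0 = Q → ¬ (∀ n, se (a n) (a (n + 1))) := by
    intro Q
    induction Q using seaTerminates.induction with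
    | _ Q ih =>
      intro a h0 hs
      exact ih (a 1) (h0 ▸ hs 0) (fun n => a (n + 1)) rfl (fun n => hs (n + 1))
  intro n
  by_contra hc
  push_neg at hc
  have hse : ∀ k : ℕ, se ((F (n + k)).1) ((F (n + k + 1)).1) := by
    intro k
    rcases hy1 (F (n + k)).1 (F (n + k)).2 with h | h
    · exact absurd h (hc (n + k) (Nat.le_add_right n k))
    · exact h
  exact nochain ((F n).1) (fun k => (F (n + k)).1) rfl hse
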